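/- Let A ⊂ ℝ^d be a finite nonempty set and let μ_A = (1/|A|) Σ_{a∈A} δ_a be the uniform atomic probability measure on A. If a finite set B ⊂ ℝ^d is a spectrum for μ_A, then A is a spectrum for the uniform atomic probability measure μ_B = (1/|B|) Σ_{b∈B} δ_b on B; i.e., {e_a : a ∈ A} is an orthonormal basis of L²(μ_B). -/

import Mathlib

open MeasureTheory Real
open scoped RealInnerProductSpace

/-- The uniform atomic probability measure `μ_A = (1/|A|) ∑_{a ∈ A} δ_a` on a finite set
`A ⊂ ℝ^d`. -/
noncomputable def unifMeasure {d : ℕ} (A : Finset (EuclideanSpace ℝ (Fin d))) :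
    Measure (EuclideanSpace ℝ (Fin d)) :=
  (A.card : ENNReal)⁻¹ • ∑ a ∈ A, Measure.dirac a

/-- A set `B ⊆ ℝ^d` is a spectrum for a Borel measure `μ` on `ℝ^d` if the exponentials
`{e_b : b ∈ B}`, `e_b(x) = e^{2πi b·x}`, form an orthonormal basis of `L²(μ)`. -/
def IsSpectrumFor {d : ℕ} (μ : Measure (EuclideanSpace ℝ (Fin d)))
    (B : Set (EuclideanSpace ℝ (Fin d))) : Prop :=
  ∃ b : HilbertBasis B ℂ (Lp ℂ 2 μ),
    ∀ l : B, (b l : EuclideanSpace ℝ (Fin d) → ℂ) =ᵐ[μ]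
      fun x => Complex.exp (2 * π * Complex.I * (⟪(l : EuclideanSpace ℝ (Fin d)), x⟫ : ℂ))

namespace SpectrumAux

variable {d : ℕ}

/-- The exponential function `e_l`. -/
noncomputable def expFun (l : EuclideanSpace ℝ (Fin d)) : EuclideanSpace ℝ (Fin d) → ℂ :=
  fun x => Complex.exp (2 * π * Complex.I * (⟪l, x⟫ : ℂ))

lemma norm_expFun (l x : EuclideanSpace ℝ (Fin d)) : ‖expFun l x‖ = 1 := by
  have : (2 * π * Complex.I * ((⟪l, x⟫ : ℝ) : ℂ)) = ((2 * π * ⟪l, x⟫ : ℝ) : ℂ) * Complex.I := by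
    push_cast; ring
  rw [expFun, this, Complex.norm_exp_ofReal_mul_I]

variable (S : Finset (EuclideanSpace ℝ (Fin d)))

instance : IsFiniteMeasure (unifMeasure S) := by
  constructor
  rw [unifMeasure, Measure.smul_apply, Measure.finset_sum_apply]
  simp only [measure_univ, Finset.sum_const, nsmul_eq_mul, mul_one, smul_eq_mul]
  rcases eq_or_ne S.card 0 with h | h
  · simp [h]
  · exact ENNReal.mul_lt_top (ENNReal.inv_lt_top.2 (by exact_mod_cast Nat.pos_of_ne_zero h))
      (ENNReal.natCast_lt_top _)

lemma unif_singleton {s : EuclideanSpace ℝ (Fin d)} (hs : s ∈ S) :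
    unifMeasure S {s} = (S.card : ENNReal)⁻¹ := by
  rw [unifMeasure, Measure.smul_apply, Measure.finset_sum_apply]
  rw [Finset.sum_eq_single_of_mem s hs]
  · rw [Measure.dirac_apply_of_mem (Set.mem_singleton s), smul_eq_mul, mul_one]
  · intro t _ hts
    rw [Measure.dirac_apply, Set.indicator_of_notMem (by simp only [Set.mem_singleton_iff]; exact hts)]

lemma unif_compl : unifMeasure S ((S : Set (EuclideanSpace ℝ (Fin d))))ᶜ = 0 := by
  rw [unifMeasure, Measure.smul_apply, Measure.finset_sum_apply]
  rw [Finset.sum_eq_zero, smul_eq_mul, mul_zero]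
  intro s hs
  rw [Measure.dirac_apply, Set.indicator_of_notMem (by simpa using hs)]

lemma eq_on_of_ae_eq {f g : EuclideanSpace ℝ (Fin d) → ℂ}
    (h : f =ᵐ[unifMeasure S] g) {s : EuclideanSpace ℝ (Fin d)} (hs : s ∈ S) : f s = g s := by
  by_contra hne
  have hsub : {s} ⊆ {x | ¬ f x = g x} := by
    intro x hx
    rw [Set.mem_singleton_iff] at hx
    subst hx; exact hne
  have h0 : unifMeasure S {x | ¬ f x = g x} = 0 := ae_iff.mp h
  have := measure_mono_null hsub h0
  rw [unif_singleton S hs] at this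
  exact ENNReal.inv_ne_zero.mpr (ENNReal.natCast_ne_top _) this

lemma integral_unif (f : EuclideanSpace ℝ (Fin d) → ℂ) :
    ∫ x, f x ∂(unifMeasure S) = (S.card : ℝ)⁻¹ • ∑ s ∈ S, f s := by
  have hint : ∀ s ∈ S, Integrable f (Measure.dirac s) := by
    intro s _
    refine (integrable_const (f s)).congr ?_
    rw [Filter.eventuallyEq_iff_exists_mem]
    exact ⟨{s}, by rw [MeasureTheory.ae_dirac_eq]; exact Filter.singleton_mem_pure,
      fun x hx => by rw [Set.mem_singleton_iff] at hx; rw [hx]⟩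
  rw [unifMeasure, integral_smul_measure, integral_finset_sum_measure hint]
  simp only [integral_dirac, ENNReal.toReal_inv, ENNReal.toReal_natCast]

lemma memℒp_expFun (l : EuclideanSpace ℝ (Fin d)) : MemLp (expFun l) 2 (unifMeasure S) := by
  have hc : Continuous (expFun l) := by
    apply Complex.continuous_exp.comp
    exact continuous_const.mul (Complex.continuous_ofReal.comp
      (Continuous.inner continuous_const continuous_id))
  exact MemLp.of_bound hc.aestronglyMeasurable 1 (ae_of_all _ fun x => le_of_eq (norm_expFun l x))

/-- The exponential as an element of `L²(unifMeasure S)`. -/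
noncomputable def expLp (l : EuclideanSpace ℝ (Fin d)) : Lp ℂ 2 (unifMeasure S) :=
  (memℒp_expFun S l).toLp (expFun l)

lemma expLp_coeFn (l : EuclideanSpace ℝ (Fin d)) :
    (expLp S l : EuclideanSpace ℝ (Fin d) → ℂ) =ᵐ[unifMeasure S] expFun l :=
  (memℒp_expFun S l).coeFn_toLp

lemma inner_expLp (l m : EuclideanSpace ℝ (Fin d)) :
    (inner ℂ (expLp S l) (expLp S m) : ℂ)
      = (S.card : ℝ)⁻¹ • ∑ s ∈ S, (starRingEnd ℂ) (expFun l s) * expFun m s := by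
  rw [MeasureTheory.L2.inner_def]
  have hae : (fun x => (inner ℂ ((expLp S l : EuclideanSpace ℝ (Fin d) → ℂ) x)
      ((expLp S m : EuclideanSpace ℝ (Fin d) → ℂ) x) : ℂ))
      =ᵐ[unifMeasure S] fun x => (starRingEnd ℂ) (expFun l x) * expFun m x := by
    filter_upwards [expLp_coeFn S l, expLp_coeFn S m] with x h1 h2
    rw [h1, h2, RCLike.inner_apply']
  rw [integral_congr_ae hae, integral_unif]

/-- Evaluation at the atoms, as a linear map. -/
noncomputable def evalHom : Lp ℂ 2 (unifMeasure S) →ₗ[ℂ] (↥S → ℂ) where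
  toFun f := fun s => (f : EuclideanSpace ℝ (Fin d) → ℂ) s.1
  map_add' f g := by
    funext s
    exact eq_on_of_ae_eq S (Lp.coeFn_add f g) s.2
  map_smul' c f := by
    funext s
    exact eq_on_of_ae_eq S (Lp.coeFn_smul c f) s.2

lemma evalHom_bijective : Function.Bijective (evalHom S) := by
  constructor
  · intro f g hfg
    apply Lp.ext (μ := unifMeasure S)
    refine ae_iff.mpr (measure_mono_null ?_ (unif_compl S))
    intro x hx hxS
    exact hx (congrFun hfg ⟨x, hxS⟩)
  · intro v
    set g : EuclideanSpace ℝ (Fin d) → ℂ :=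
      ∑ s ∈ S.attach, Set.indicator {(s : EuclideanSpace ℝ (Fin d))} (fun _ => v s) with hg
    have hgmem : MemLp g 2 (unifMeasure S) := by
      refine memLp_finset_sum' _ fun s _ => ?_
      exact memLp_indicator_const 2 (measurableSet_singleton _) (v s)
        (Or.inr (measure_ne_top _ _))
    refine ⟨hgmem.toLp g, ?_⟩
    funext s
    have h1 : (hgmem.toLp g : EuclideanSpace ℝ (Fin d) → ℂ) s.1 = g s.1 :=
      eq_on_of_ae_eq S hgmem.coeFn_toLp s.2
    show (hgmem.toLp g : EuclideanSpace ℝ (Fin d) → ℂ) s.1 = v s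
    rw [h1, hg, Finset.sum_apply]
    rw [Finset.sum_eq_single_of_mem s (Finset.mem_attach _ _)]
    · rw [Set.indicator_of_mem (Set.mem_singleton _)]
    · intro t _ hts
      rw [Set.indicator_of_notMem]
      simp only [Set.mem_singleton_iff]
      exact fun h => hts (Subtype.ext h.symm)

noncomputable def evalEquiv : Lp ℂ 2 (unifMeasure S) ≃ₗ[ℂ] (↥S → ℂ) :=
  LinearEquiv.ofBijective (evalHom S) (evalHom_bijective S)

instance : FiniteDimensional ℂ (Lp ℂ 2 (unifMeasure S)) :=
  Module.Finite.equiv (evalEquiv S).symm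

lemma finrank_L2 : Module.finrank ℂ (Lp ℂ 2 (unifMeasure S)) = S.card := by
  rw [(evalEquiv S).finrank_eq, Module.finrank_fintype_fun_eq_card, Fintype.card_coe]

lemma expFun_symm (l x : EuclideanSpace ℝ (Fin d)) : expFun l x = expFun x l := by
  rw [expFun, expFun, real_inner_comm]

lemma sum_set_coe (f : EuclideanSpace ℝ (Fin d) → ℂ) :
    ∑ s : (S : Set (EuclideanSpace ℝ (Fin d))), f ↑s = ∑ s ∈ S, f s :=
  Finset.sum_coe_sort S f

lemma card_set_coe : Fintype.card (S : Set (EuclideanSpace ℝ (Fin d))) = S.card :=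
  Fintype.card_coe S

lemma hilbertBasis_card {ι : Type*} [Fintype ι] {E : Type*} [NormedAddCommGroup E]
    [InnerProductSpace ℂ E] [FiniteDimensional ℂ E] (b : HilbertBasis ι ℂ E) :
    Fintype.card ι = Module.finrank ℂ E := by
  have hcl : IsClosed ((Submodule.span ℂ (Set.range ⇑b)) : Set E) :=
    Submodule.closed_of_finiteDimensional _
  have hsp : Submodule.span ℂ (Set.range ⇑b) = ⊤ := by
    rw [← b.dense_span, hcl.submodule_topologicalClosure_eq]
  exact (Module.finrank_eq_card_basis (Module.Basis.mk b.orthonormal.linearIndependent hsp.ge)).symm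

end SpectrumAux

open SpectrumAux Matrix

/-- If a finite set `B ⊂ ℝ^d` is a spectrum for the uniform atomic probability measure `μ_A`
on a finite nonempty set `A ⊂ ℝ^d`, then `A` is a spectrum for the uniform atomic probability
measure `μ_B` on `B`. -/
theorem isSpectrumFor_symm {d : ℕ}
    (A : Finset (EuclideanSpace ℝ (Fin d))) (hA : A.Nonempty)
    (B : Finset (EuclideanSpace ℝ (Fin d)))
    (hB : IsSpectrumFor (unifMeasure A) (B : Set (EuclideanSpace ℝ (Fin d)))) :
    IsSpectrumFor (unifMeasure B) (A : Set (EuclideanSpace ℝ (Fin d))) := by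
  classical
  obtain ⟨b, hb⟩ := hB
  have hA0 : (A.card : ℂ) ≠ 0 := by
    exact_mod_cast Nat.cast_ne_zero.mpr (Finset.card_ne_zero_of_mem hA.choose_spec)
  have hbl : ∀ l : (B : Set (EuclideanSpace ℝ (Fin d))),
      b l = expLp A (l : EuclideanSpace ℝ (Fin d)) := fun l =>
    Lp.ext ((hb l).trans (expLp_coeFn A (l : EuclideanSpace ℝ (Fin d))).symm)
  -- cardinality: |B| = |A|
  have hcard : B.card = A.card := by
    rw [← card_set_coe B, hilbertBasis_card b, finrank_L2 A]
  -- orthonormality hypothesis, summed form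
  have horth : ∀ l m : (B : Set (EuclideanSpace ℝ (Fin d))),
      ∑ a ∈ A, (starRingEnd ℂ) (expFun (l : EuclideanSpace ℝ (Fin d)) a) *
        expFun (m : EuclideanSpace ℝ (Fin d)) a
        = if l = m then (A.card : ℂ) else 0 := by
    intro l m
    have h := orthonormal_iff_ite.mp b.orthonormal l m
    simp only [hbl] at h
    rw [inner_expLp, Complex.real_smul] at h
    have h2 : ∑ a ∈ A, (starRingEnd ℂ) (expFun (l : EuclideanSpace ℝ (Fin d)) a) *
        expFun (m : EuclideanSpace ℝ (Fin d)) a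
        = (A.card : ℂ) * (if l = m then 1 else 0) := by
      rw [← h]
      push_cast
      rw [← mul_assoc, mul_inv_cancel₀ hA0, one_mul]
    rw [h2]
    split_ifs <;> ring
  -- the matrix of exponentials
  set M : Matrix (B : Set (EuclideanSpace ℝ (Fin d))) (A : Set (EuclideanSpace ℝ (Fin d))) ℂ :=
    fun l a => expFun (l : EuclideanSpace ℝ (Fin d)) (a : EuclideanSpace ℝ (Fin d)) with hM
  have h1 : M * Mᴴ = (A.card : ℂ) • (1 : Matrix (B : Set (EuclideanSpace ℝ (Fin d)))
      (B : Set (EuclideanSpace ℝ (Fin d))) ℂ) := by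
    ext l m
    rw [Matrix.mul_apply]
    have : ∑ a : (A : Set (EuclideanSpace ℝ (Fin d))), M l a * Mᴴ a m
        = ∑ a ∈ A, (starRingEnd ℂ) (expFun (m : EuclideanSpace ℝ (Fin d)) a) *
          expFun (l : EuclideanSpace ℝ (Fin d)) a := by
      rw [← sum_set_coe A]
      exact Finset.sum_congr rfl fun a _ => by
        simp only [Matrix.conjTranspose_apply, RCLike.star_def]; simp only [hM]; ring
    rw [this, horth m l]
    simp only [Matrix.smul_apply, Matrix.one_apply, smul_eq_mul]
    by_cases hlm : l = m
    · simp [hlm]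
    · simp [hlm, Ne.symm hlm]
  -- transfer to a square matrix
  have hcards : Fintype.card (A : Set (EuclideanSpace ℝ (Fin d)))
      = Fintype.card (B : Set (EuclideanSpace ℝ (Fin d))) := by
    rw [card_set_coe, card_set_coe, hcard]
  set e := Fintype.equivOfCardEq hcards with he
  set M' : Matrix (A : Set (EuclideanSpace ℝ (Fin d))) (A : Set (EuclideanSpace ℝ (Fin d))) ℂ :=
    fun a a' => M (e a) a' with hM'
  have h2 : M' * M'ᴴ = (A.card : ℂ) • (1 : Matrix (A : Set (EuclideanSpace ℝ (Fin d)))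
      (A : Set (EuclideanSpace ℝ (Fin d))) ℂ) := by
    ext a a'
    have heq : (M' * M'ᴴ) a a' = (M * Mᴴ) (e a) (e a') := by
      rw [Matrix.mul_apply, Matrix.mul_apply]
      exact Finset.sum_congr rfl fun c _ => by
        rw [Matrix.conjTranspose_apply, Matrix.conjTranspose_apply, hM']
    rw [heq, h1]
    simp only [Matrix.smul_apply, Matrix.one_apply, smul_eq_mul, e.injective.eq_iff]
  have h2' : M' * ((A.card : ℂ)⁻¹ • M'ᴴ) = 1 := by
    rw [Matrix.mul_smul, h2, smul_smul, inv_mul_cancel₀ hA0, one_smul]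
  have h3 : M'ᴴ * M' = (A.card : ℂ) • (1 : Matrix (A : Set (EuclideanSpace ℝ (Fin d)))
      (A : Set (EuclideanSpace ℝ (Fin d))) ℂ) := by
    have := mul_eq_one_comm.mp h2'
    rw [Matrix.smul_mul] at this
    calc M'ᴴ * M' = (A.card : ℂ) • ((A.card : ℂ)⁻¹ • (M'ᴴ * M')) := by
          rw [smul_smul, mul_inv_cancel₀ hA0, one_smul]
      _ = (A.card : ℂ) • (1 : Matrix _ _ ℂ) := by rw [this]
  have h4 : Mᴴ * M = (A.card : ℂ) • (1 : Matrix (A : Set (EuclideanSpace ℝ (Fin d)))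
      (A : Set (EuclideanSpace ℝ (Fin d))) ℂ) := by
    rw [← h3]
    ext a a'
    rw [Matrix.mul_apply, Matrix.mul_apply]
    rw [← Equiv.sum_comp e (fun l => Mᴴ a l * M l a')]
    exact Finset.sum_congr rfl fun c _ => by
      rw [Matrix.conjTranspose_apply, Matrix.conjTranspose_apply, hM']
  -- the exponentials over A are orthonormal in L²(μ_B)
  have horthA : Orthonormal ℂ
      (fun a : (A : Set (EuclideanSpace ℝ (Fin d))) =>
        expLp B (a : EuclideanSpace ℝ (Fin d))) := by
    rw [orthonormal_iff_ite]
    intro a a'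
    rw [inner_expLp]
    have hsum : ∑ x ∈ B, (starRingEnd ℂ) (expFun (a : EuclideanSpace ℝ (Fin d)) x) *
        expFun (a' : EuclideanSpace ℝ (Fin d)) x = (Mᴴ * M) a a' := by
      rw [Matrix.mul_apply, ← sum_set_coe B]
      refine Finset.sum_congr rfl fun l _ => ?_
      simp only [Matrix.conjTranspose_apply, RCLike.star_def]; simp only [hM]
      rw [expFun_symm (l : EuclideanSpace ℝ (Fin d)) (a : EuclideanSpace ℝ (Fin d)),
        expFun_symm (l : EuclideanSpace ℝ (Fin d)) (a' : EuclideanSpace ℝ (Fin d))]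
    rw [hsum, h4]
    simp only [Matrix.smul_apply, Matrix.one_apply, smul_eq_mul, hcard]
    by_cases haa : a = a'
    · simp only [haa, if_true, mul_one, Complex.real_smul]
      push_cast
      rw [inv_mul_cancel₀ hA0]
    · simp [haa]
  -- the span is everything
  have hfr : Fintype.card (A : Set (EuclideanSpace ℝ (Fin d)))
      = Module.finrank ℂ (Lp ℂ 2 (unifMeasure B)) := by
    rw [finrank_L2 B, card_set_coe, hcard]
  have hsp : Submodule.span ℂ (Set.range
      (fun a : (A : Set (EuclideanSpace ℝ (Fin d))) =>
        expLp B (a : EuclideanSpace ℝ (Fin d)))) = ⊤ :=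
    horthA.linearIndependent.span_eq_top_of_card_eq_finrank' hfr
  have hsp' : ⊤ ≤ (Submodule.span ℂ (Set.range
      (fun a : (A : Set (EuclideanSpace ℝ (Fin d))) =>
        expLp B (a : EuclideanSpace ℝ (Fin d))))).topologicalClosure :=
    hsp ▸ Submodule.le_topologicalClosure _
  refine ⟨HilbertBasis.mk horthA hsp', fun l => ?_⟩
  have hco := congrFun (HilbertBasis.coe_mk horthA hsp') l
  have key : ∀ f g : Lp ℂ 2 (unifMeasure B), f = g →
      (f : EuclideanSpace ℝ (Fin d) → ℂ) =ᵐ[unifMeasure B]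
        (g : EuclideanSpace ℝ (Fin d) → ℂ) := fun f g h => by rw [h]
  exact (key _ _ hco).trans (expLp_coeFn B (l : EuclideanSpace ℝ (Fin d)))
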